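/- Let z > 0 satisfy tan z = z (equivalently, z is a positive root of the Bessel function J_{3/2}, since J_{3/2}(x) is a nonzero multiple of (sin x)/x − cos x). Then for every t ∈ [0,1], the function f(t) = sin(2z(t − 1/2)) is an eigenfunction of the kernel k^τ(s,t) = min(s,t) − (11/10)(s+t) + 2(s²+t²) − (s³+t³) − 3(st²+ts²) + 2(st³+ts³) + (6/5)st + 2/15 with eigenvalue λ = 4z², in the sense that f(t) = λ · ∫_0^1 k^τ(s,t)·f(s) ds. (These are the even-indexed eigenpairs of the Lemma, λ_{2n}^τ = 4 z_{3/2,n}², with eigenfunctions proportional to sin(√λ (t − 1/2)).) -/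

import Mathlib

open Real intervalIntegral

private lemma poly_sin_antideriv (c a0 a1 a2 a3 : ℝ) (hc : c ≠ 0) (s : ℝ) :
    HasDerivAt (fun u : ℝ =>
      -(a0 + a1*u + a2*u^2 + a3*u^3) * Real.cos (c*(u-1/2)) / c
        + (a1 + 2*a2*u + 3*a3*u^2) * Real.sin (c*(u-1/2)) / c^2
        + (2*a2 + 6*a3*u) * Real.cos (c*(u-1/2)) / c^3
        - (6*a3) * Real.sin (c*(u-1/2)) / c^4)
      ((a0 + a1*s + a2*s^2 + a3*s^3) * Real.sin (c*(s-1/2))) s := by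
  have h1 : HasDerivAt (fun u : ℝ => c*(u-1/2)) c s := by
    have h := ((hasDerivAt_id s).sub_const (1/2)).const_mul c
    rw [mul_one] at h
    exact h
  have hsin : HasDerivAt (fun u : ℝ => Real.sin (c*(u-1/2)))
      (Real.cos (c*(s-1/2)) * c) s := (Real.hasDerivAt_sin _).comp s h1
  have hcos : HasDerivAt (fun u : ℝ => Real.cos (c*(u-1/2)))
      (-Real.sin (c*(s-1/2)) * c) s := (Real.hasDerivAt_cos _).comp s h1
  have hp0 : HasDerivAt (fun u : ℝ => -(a0 + a1*u + a2*u^2 + a3*u^3))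
      (-(a1 + 2*a2*s + 3*a3*s^2)) s := by
    have : HasDerivAt (fun u : ℝ => a0 + a1*u + a2*u^2 + a3*u^3)
        (a1 + 2*a2*s + 3*a3*s^2) s := by
      have h := (((hasDerivAt_id s).const_mul a1).const_add a0).add
        (((hasDerivAt_pow 2 s).const_mul a2).add ((hasDerivAt_pow 3 s).const_mul a3))
      convert h using 1
      all_goals try ext u
      all_goals simp
      all_goals ring
    exact this.neg
  have hp1 : HasDerivAt (fun u : ℝ => a1 + 2*a2*u + 3*a3*u^2)
      (2*a2 + 6*a3*s) s := by
    have h := (((hasDerivAt_id s).const_mul (2*a2)).const_add a1).add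
      ((hasDerivAt_pow 2 s).const_mul (3*a3))
    convert h using 1
    any_goals rfl
    all_goals simp
    all_goals ring
  have hp2 : HasDerivAt (fun u : ℝ => 2*a2 + 6*a3*u) (6*a3) s := by
    simpa using ((hasDerivAt_id s).const_mul (6*a3)).const_add (2*a2)
  have hT :=
    (((hp0.mul hcos).div_const c).add ((hp1.mul hsin).div_const (c^2))).add
      (((hp2.mul hcos).div_const (c^3)).sub
        ((hsin.const_mul (6*a3)).div_const (c^4)))
  convert hT using 1
  any_goals rfl
  · ext u; simp only [Pi.add_apply, Pi.sub_apply, Pi.mul_apply]; ring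
  · field_simp
    ring

private lemma poly_sin_integral (c a0 a1 a2 a3 x y : ℝ) (hc : c ≠ 0) :
    ∫ s in x..y, (a0 + a1*s + a2*s^2 + a3*s^3) * Real.sin (c*(s-1/2)) =
      (-(a0 + a1*y + a2*y^2 + a3*y^3) * Real.cos (c*(y-1/2)) / c
        + (a1 + 2*a2*y + 3*a3*y^2) * Real.sin (c*(y-1/2)) / c^2
        + (2*a2 + 6*a3*y) * Real.cos (c*(y-1/2)) / c^3
        - (6*a3) * Real.sin (c*(y-1/2)) / c^4)
      - (-(a0 + a1*x + a2*x^2 + a3*x^3) * Real.cos (c*(x-1/2)) / c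
        + (a1 + 2*a2*x + 3*a3*x^2) * Real.sin (c*(x-1/2)) / c^2
        + (2*a2 + 6*a3*x) * Real.cos (c*(x-1/2)) / c^3
        - (6*a3) * Real.sin (c*(x-1/2)) / c^4) := by
  apply intervalIntegral.integral_eq_sub_of_hasDerivAt
  · intro s _
    exact poly_sin_antideriv c a0 a1 a2 a3 hc s
  · apply Continuous.intervalIntegrable
    fun_prop

theorem detrended_wiener_kernel_eigenfunction_sin (z : ℝ) (hz : 0 < z)
    (hzz : Real.tan z = z) (t : ℝ) (ht : t ∈ Set.Icc (0 : ℝ) 1) :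
    Real.sin (2 * z * (t - 1 / 2)) =
      4 * z ^ 2 *
        ∫ s in (0 : ℝ)..1,
          (min s t - (11 / 10) * (s + t) + 2 * (s ^ 2 + t ^ 2) - (s ^ 3 + t ^ 3) -
              3 * (s * t ^ 2 + t * s ^ 2) + 2 * (s * t ^ 3 + t * s ^ 3) +
              (6 / 5) * (s * t) + 2 / 15) *
            Real.sin (2 * z * (s - 1 / 2)) := by
  obtain ⟨ht0, ht1⟩ := ht
  have hz0 : z ≠ 0 := ne_of_gt hz
  have hc : (2 : ℝ) * z ≠ 0 := by positivity
  have hcz : Real.cos z ≠ 0 := by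
    intro h
    rw [Real.tan_eq_sin_div_cos, h, div_zero] at hzz
    exact hz.ne' hzz.symm
  have hsz : Real.sin z = z * Real.cos z := by
    rw [Real.tan_eq_sin_div_cos] at hzz
    field_simp at hzz
    linarith [hzz]
  set g : ℝ → ℝ := fun s =>
    (min s t - (11 / 10) * (s + t) + 2 * (s ^ 2 + t ^ 2) - (s ^ 3 + t ^ 3) -
        3 * (s * t ^ 2 + t * s ^ 2) + 2 * (s * t ^ 3 + t * s ^ 3) +
        (6 / 5) * (s * t) + 2 / 15) *
      Real.sin (2 * z * (s - 1 / 2)) with hg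
  have hgc : Continuous g := by
    apply Continuous.mul
    · fun_prop
    · fun_prop
  have hsplit : ∫ s in (0:ℝ)..1, g s = (∫ s in (0:ℝ)..t, g s) + ∫ s in t..(1:ℝ), g s :=
    (intervalIntegral.integral_add_adjacent_intervals
      (hgc.intervalIntegrable 0 t) (hgc.intervalIntegrable t 1)).symm
  have hA : ∫ s in (0:ℝ)..t, g s =
      ∫ s in (0:ℝ)..t,
        ((-11/10*t + 2*t^2 - t^3 + 2/15) + (-1/10 + 6/5*t - 3*t^2 + 2*t^3)*s
          + (2 - 3*t)*s^2 + (-1 + 2*t)*s^3) * Real.sin (2*z*(s-1/2)) := by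
    apply intervalIntegral.integral_congr
    intro s hs
    rw [Set.uIcc_of_le ht0] at hs
    have hm : min s t = s := min_eq_left hs.2
    simp only [hg, hm]
    ring
  have hB : ∫ s in t..(1:ℝ), g s =
      ∫ s in t..(1:ℝ),
        ((-1/10*t + 2*t^2 - t^3 + 2/15) + (-11/10 + 6/5*t - 3*t^2 + 2*t^3)*s
          + (2 - 3*t)*s^2 + (-1 + 2*t)*s^3) * Real.sin (2*z*(s-1/2)) := by
    apply intervalIntegral.integral_congr
    intro s hs
    rw [Set.uIcc_of_le ht1] at hs
    have hm : min s t = t := min_eq_right hs.1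
    simp only [hg, hm]
    ring
  rw [hsplit, hA, hB,
    poly_sin_integral (2*z) _ _ _ _ 0 t hc,
    poly_sin_integral (2*z) _ _ _ _ t 1 hc]
  rw [show (2*z)*((0:ℝ)-1/2) = -z by ring, show (2*z)*((1:ℝ)-1/2) = z by ring,
    Real.sin_neg, Real.cos_neg, hsz]
  field_simp
  ring
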